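/- Let f₁, …, fₙ ∈ S² be n distinct points (n ≥ 2) and suppose Π₁, …, Πₙ are n distinct planes through the origin whose reflections each permute {f₁, …, fₙ}. If every one of the reflections R_{Π₁}, …, R_{Πₙ} fixes f₁, then n = 2 and f₂ = -f₁. -/

import Mathlib

open RealInnerProductSpace

private lemma refl_formula (ν x : EuclideanSpace ℝ (Fin 3)) :
    Submodule.reflection (ℝ ∙ ν)ᗮ x = x - ((2:ℝ) * (⟪ν, x⟫ / (‖ν‖^2))) • ν := by
  have h := Submodule.starProjection_add_starProjection_orthogonal (K := ℝ ∙ ν) x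
  rw [Submodule.starProjection_singleton] at h
  simp only [RCLike.ofReal_real_eq_id, id_eq] at h
  have hp : ((ℝ ∙ ν)ᗮ.starProjection x : EuclideanSpace ℝ (Fin 3))
      = x - (⟪ν, x⟫ / (‖ν‖^2)) • ν := eq_sub_of_add_eq' h
  rw [Submodule.reflection_apply, hp, two_smul]
  module

set_option maxHeartbeats 1000000 in
/-- Given `n ≥ 2` distinct points `f i ∈ S²` and `n` distinct planes
through the origin whose reflections each permute `{f 1, …, f n}`, if every one of the
reflections fixes `f 1`, then `n = 2` and `f 2 = -f 1`. -/
theorem stmt_5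
    (n : ℕ) (hn : 2 ≤ n)
    (f : Fin n → EuclideanSpace ℝ (Fin 3))
    (hf : ∀ i, ‖f i‖ = 1) (hinj : Function.Injective f)
    (ν : Fin n → EuclideanSpace ℝ (Fin 3)) (hν : ∀ k, ν k ≠ 0)
    (hdist : ∀ k l, k ≠ l → (ℝ ∙ ν k)ᗮ ≠ (ℝ ∙ ν l)ᗮ)
    (hperm : ∀ k, (Submodule.reflection (ℝ ∙ ν k)ᗮ) '' Set.range f = Set.range f)
    (hfix : ∀ k, Submodule.reflection (ℝ ∙ ν k)ᗮ (f ⟨0, by omega⟩) = f ⟨0, by omega⟩) :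
    n = 2 ∧ f ⟨1, by omega⟩ = -f ⟨0, by omega⟩ := by
  have h3 : Module.finrank ℝ (EuclideanSpace ℝ (Fin 3)) = 3 := by
    simp [finrank_euclideanSpace]
  set i0 : Fin n := ⟨0, by omega⟩ with hi0def
  set i1 : Fin n := ⟨1, by omega⟩ with hi1def
  have hf0mem : ∀ k, f i0 ∈ (ℝ ∙ ν k)ᗮ := fun k => (Submodule.reflection_eq_self_iff _).mp (hfix k)
  have key : ∀ i, f i = f i0 ∨ f i = -(f i0) := by
    intro j
    by_contra hj
    push_neg at hj
    obtain ⟨hj1, hj2⟩ := hj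
    set p := f j with hpdef
    -- linear independence of f i0 and p
    have hpf0 : LinearIndependent ℝ ![f i0, p] := by
      rw [LinearIndependent.pair_iff]
      intro s t hst
      by_cases ht : t = 0
      · subst ht
        have hs : s • f i0 = 0 := by simpa using hst
        have : f i0 ≠ 0 := by
          intro h; have := hf i0; rw [h] at this; simp at this
        rcases smul_eq_zero.mp hs with h | h
        · exact ⟨h, rfl⟩
        · exact absurd h this
      · exfalso
        have hp : p = (-(s/t)) • f i0 := by
          have h1 : t • p = (-s) • f i0 := by
            rw [neg_smul]; exact eq_neg_of_add_eq_zero_right hst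
          have h2 : (t⁻¹ * t) • p = (t⁻¹ * -s) • f i0 := by
            rw [mul_smul, mul_smul, h1]
          rw [inv_mul_cancel₀ ht, one_smul] at h2
          rw [h2]
          congr 1
          field_simp
        have habs : |(-(s/t))| = 1 := by
          have hx := hf j
          rw [← hpdef, hp, norm_smul, hf i0, mul_one, Real.norm_eq_abs] at hx
          exact hx
        rcases abs_eq (by norm_num : (0:ℝ) ≤ 1) |>.mp habs with h | h
        · rw [h, one_smul] at hp; exact hj1 hp
        · rw [h] at hp; simp only [neg_one_smul] at hp; exact hj2 hp
    set W : Submodule ℝ (EuclideanSpace ℝ (Fin 3)) := Submodule.span ℝ {f i0, p} with hWdef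
    have hWrank : Module.finrank ℝ W = 2 := by
      have : ({f i0, p} : Set (EuclideanSpace ℝ (Fin 3))) = Set.range ![f i0, p] := by
        simp only [Matrix.range_cons, Matrix.range_empty, Set.union_empty,
          Set.union_singleton]
        rw [Set.pair_comm]
      rw [hWdef, this, finrank_span_eq_card hpf0]
      simp
    have hWorth : Module.finrank ℝ Wᗮ = 1 := by
      have := Submodule.finrank_add_finrank_orthogonal W
      rw [hWrank, h3] at this
      omega
    -- the images of p under reflections
    have himg : ∀ k, ∃ i, f i = Submodule.reflection (ℝ ∙ ν k)ᗮ p := by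
      intro k
      have : Submodule.reflection (ℝ ∙ ν k)ᗮ p ∈ Set.range f := by
        rw [← hperm k]; exact Set.mem_image_of_mem _ ⟨j, rfl⟩
      obtain ⟨i, hi⟩ := this; exact ⟨i, hi⟩
    choose g hg using himg
    have hg0 : ∀ k, g k ≠ i0 := by
      intro k h
      apply hj1
      have hgk := hg k
      rw [h] at hgk
      have h2 := congrArg (Submodule.reflection (ℝ ∙ ν k)ᗮ) hgk
      rw [Submodule.reflection_reflection, hfix k] at h2
      exact h2.symm
    have hginj : Function.Injective g := by
      intro k l hkl
      by_contra hne
      apply hdist k l hne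
      have heq : Submodule.reflection (ℝ ∙ ν k)ᗮ p = Submodule.reflection (ℝ ∙ ν l)ᗮ p := by
        rw [← hg k, ← hg l, hkl]
      rw [refl_formula, refl_formula] at heq
      have heq2 : ((2:ℝ) * (⟪ν k, p⟫ / ‖ν k‖^2)) • ν k
          = ((2:ℝ) * (⟪ν l, p⟫ / ‖ν l‖^2)) • ν l := by
        have := sub_right_injective heq
        exact this
      have hnk : ‖ν k‖ ≠ 0 := norm_ne_zero_iff.mpr (hν k)
      have hnl : ‖ν l‖ ≠ 0 := norm_ne_zero_iff.mpr (hν l)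
      by_cases ha : ⟪ν k, p⟫ = 0
      · -- both inner products vanish; both planes contain W
        have hb : ⟪ν l, p⟫ = 0 := by
          rw [ha] at heq2
          simp only [zero_div, mul_zero, zero_smul] at heq2
          rcases smul_eq_zero.mp heq2.symm with h | h
          · rcases mul_eq_zero.mp h with h2 | h2
            · norm_num at h2
            · rcases div_eq_zero_iff.mp h2 with h3 | h3
              · exact h3
              · exact absurd (norm_eq_zero.mp (pow_eq_zero_iff (by norm_num) |>.mp h3)) (hν l)
          · exact absurd h (hν l)
        have hspan : ∀ m, ⟪ν m, p⟫ = 0 → (ℝ ∙ ν m) = Wᗮ := by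
          intro m hm
          have hle : W ≤ (ℝ ∙ ν m)ᗮ := by
            rw [hWdef, Submodule.span_le]
            rintro x (rfl | rfl)
            · exact hf0mem m
            · rw [SetLike.mem_coe, Submodule.mem_orthogonal_singleton_iff_inner_right]
              exact hm
          have hle2 : (ℝ ∙ ν m) ≤ Wᗮ := by
            rw [← Submodule.orthogonal_orthogonal (ℝ ∙ ν m)]
            exact Submodule.orthogonal_le hle
          refine Submodule.eq_of_le_of_finrank_le hle2 ?_
          rw [hWorth, finrank_span_singleton (hν m)]
        rw [congrArg Submodule.orthogonal (hspan k ha),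
            congrArg Submodule.orthogonal (hspan l hb)]
      · -- ν k parallel to ν l
        have hc : ((2:ℝ) * (⟪ν k, p⟫ / ‖ν k‖^2)) ≠ 0 :=
          mul_ne_zero two_ne_zero (div_ne_zero ha (pow_ne_zero 2 hnk))
        have hmem : ν k ∈ ℝ ∙ ν l := by
          rw [Submodule.mem_span_singleton]
          refine ⟨((2:ℝ) * (⟪ν k, p⟫ / ‖ν k‖^2))⁻¹ * ((2:ℝ) * (⟪ν l, p⟫ / ‖ν l‖^2)), ?_⟩
          rw [mul_smul, ← heq2, inv_smul_smul₀ hc]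
        have hle : (ℝ ∙ ν k) ≤ ℝ ∙ ν l := by
          rw [Submodule.span_singleton_le_iff_mem]; exact hmem
        have : (ℝ ∙ ν k) = ℝ ∙ ν l := by
          refine Submodule.eq_of_le_of_finrank_le hle ?_
          rw [finrank_span_singleton (hν k), finrank_span_singleton (hν l)]
        rw [this]
    -- cardinality contradiction
    have hsub : Finset.univ.image g ⊆ Finset.univ.erase i0 := by
      intro x hx
      simp only [Finset.mem_image] at hx
      obtain ⟨k, _, rfl⟩ := hx
      exact Finset.mem_erase.mpr ⟨hg0 k, Finset.mem_univ _⟩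
    have hcard := Finset.card_le_card hsub
    rw [Finset.card_image_of_injective _ hginj, Finset.card_erase_of_mem (Finset.mem_univ _)]
      at hcard
    simp only [Finset.card_univ, Fintype.card_fin] at hcard
    omega
  -- conclude
  have hne01 : i1 ≠ i0 := by
    simp [hi0def, hi1def, Fin.ext_iff]
  have h1 : f i1 = -(f i0) := by
    rcases key i1 with h | h
    · exact absurd (hinj h) hne01
    · exact h
  refine ⟨?_, h1⟩
  by_contra hne
  have h3n : 3 ≤ n := by omega
  set i2 : Fin n := ⟨2, by omega⟩ with hi2def
  have h2 : f i2 = -(f i0) := by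
    rcases key i2 with h | h
    · exact absurd (hinj h) (by simp [hi0def, hi2def, Fin.ext_iff])
    · exact h
  have : i2 = i1 := hinj (by rw [h1, h2])
  simp [hi1def, hi2def, Fin.ext_iff] at this
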